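/- Let G be a geometric random variable on {1,2,3,…} with success probability p = 1 - e^{-λ}, λ ∈ (0,1), and set X = e^G, g(s) = E[e^{-sX}]. Then the limit lim_{s→0+} (-s g'(s)/(1 - g(s))) does not exist; more precisely, for each α ∈ [0,1), along s_n = e^{-n-α} the limit L_α = lim_{n→∞} (-s_n g'(s_n)/(1 - g(s_n))) exists, and the function α ↦ L_α is non-constant. -/

import Mathlib

open MeasureTheory Real Set Filter

noncomputable section
namespace S14

/-- summable majorant over ℤ -/
def maj (lam α : ℝ) (j : ℤ) : ℝ :=
  min (Real.exp (-lam * j)) (Real.exp ((1 - lam) * j) * Real.exp (-α))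

lemma maj_nonneg (lam α : ℝ) (j : ℤ) : 0 ≤ maj lam α j :=
  le_min (exp_pos _).le (by positivity)

lemma summable_maj {lam : ℝ} (h0 : 0 < lam) (h1 : lam < 1) (α : ℝ) :
    Summable (maj lam α) := by
  apply Summable.of_nat_of_neg
  · apply Summable.of_nonneg_of_le (fun n => maj_nonneg _ _ _)
      (fun n => (min_le_left _ _).trans_eq ?_)
      (summable_geometric_of_lt_one (exp_pos (-lam)).le (exp_lt_one_iff.2 (by linarith)))
    rw [← Real.exp_nat_mul]; push_cast; ring_nf
  · apply Summable.of_nonneg_of_le (fun n => maj_nonneg _ _ _)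
      (fun n => (min_le_right _ _).trans_eq ?_)
      (((summable_geometric_of_lt_one (exp_pos (-(1-lam))).le
        (exp_lt_one_iff.2 (by linarith))).mul_right (Real.exp (-α))))
    rw [← Real.exp_nat_mul]; push_cast; ring_nf

lemma min_one_bounds {x : ℝ} (hx : 0 ≤ x) :
    (0 ≤ 1 - Real.exp (-x) ∧ 1 - Real.exp (-x) ≤ min 1 x) ∧
      (0 ≤ x * Real.exp (-x) ∧ x * Real.exp (-x) ≤ min 1 x) := by
  have h1 : Real.exp (-x) ≤ 1 := exp_le_one_iff.2 (by linarith)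
  have h2 : 1 - x ≤ Real.exp (-x) := by
    have := Real.add_one_le_exp (-x); linarith
  have h3 : x ≤ Real.exp x := by linarith [Real.add_one_le_exp x]
  refine ⟨⟨by linarith, le_min (by linarith [Real.exp_pos (-x)]) (by linarith)⟩,
    ⟨by positivity, le_min ?_ ?_⟩⟩
  · have hxe : x * Real.exp (-x) * Real.exp x ≤ 1 * Real.exp x := by
      rw [mul_assoc, ← Real.exp_add]; simpa using h3
    exact le_of_mul_le_mul_right (by simpa using hxe) (exp_pos x)
  · nlinarith [exp_pos (-x)]


def phi (c t : ℝ) : ℝ := t * Real.exp (-t) - c * (1 - Real.exp (-t))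

def aterm (lam α : ℝ) (j : ℤ) : ℝ :=
  (1 - Real.exp (-lam)) * Real.exp (-lam * ((j : ℝ) - 1)) *
    (1 - Real.exp (-Real.exp ((j : ℝ) - α)))

def bterm (lam α : ℝ) (j : ℤ) : ℝ :=
  (1 - Real.exp (-lam)) * Real.exp (-lam * ((j : ℝ) - 1)) *
    (Real.exp ((j : ℝ) - α) * Real.exp (-Real.exp ((j : ℝ) - α)))

def cterm (lam c α : ℝ) (j : ℤ) : ℝ :=
  (1 - Real.exp (-lam)) * Real.exp (-lam * ((j : ℝ) - 1)) * phi c (Real.exp ((j : ℝ) - α))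

lemma cterm_eq (lam c α : ℝ) (j : ℤ) :
    cterm lam c α j = bterm lam α j - c * aterm lam α j := by
  simp only [cterm, bterm, aterm, phi]; ring

lemma bound_aux {lam α x : ℝ} (h0 : 0 < lam) {j : ℤ}
    (hx : 0 ≤ x) (hx1 : x ≤ 1) (hx2 : x ≤ Real.exp ((j : ℝ) - α)) :
    (1 - Real.exp (-lam)) * Real.exp (-lam * ((j : ℝ) - 1)) * x ≤
      Real.exp lam * maj lam α j := by
  have hp1 : 1 - Real.exp (-lam) ≤ 1 := by linarith [Real.exp_pos (-lam)]
  have key : Real.exp (-lam * ((j : ℝ) - 1)) * x ≤ Real.exp lam * maj lam α j := by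
    rw [show -lam * ((j : ℝ) - 1) = lam + -lam * j by ring, Real.exp_add, mul_assoc]
    apply mul_le_mul_of_nonneg_left _ (exp_pos lam).le
    apply le_min
    · calc Real.exp (-lam * (j:ℝ)) * x ≤ Real.exp (-lam * (j:ℝ)) * 1 :=
        mul_le_mul_of_nonneg_left hx1 (exp_pos _).le
      _ = _ := mul_one _
    · calc Real.exp (-lam * (j:ℝ)) * x ≤ Real.exp (-lam * (j:ℝ)) * Real.exp ((j:ℝ) - α) :=
        mul_le_mul_of_nonneg_left hx2 (exp_pos _).le
      _ = Real.exp ((1 - lam) * (j:ℝ)) * Real.exp (-α) := by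
        rw [← Real.exp_add, ← Real.exp_add]; ring_nf
  calc (1 - Real.exp (-lam)) * Real.exp (-lam * ((j : ℝ) - 1)) * x
      ≤ 1 * (Real.exp (-lam * ((j : ℝ) - 1)) * x) := by
        rw [mul_assoc]
        exact mul_le_mul_of_nonneg_right hp1 (by positivity)
    _ = Real.exp (-lam * ((j : ℝ) - 1)) * x := one_mul _
    _ ≤ _ := key

lemma aterm_nonneg {lam : ℝ} (h0 : 0 < lam) (α : ℝ) (j : ℤ) : 0 ≤ aterm lam α j := by
  have hp0 : 0 ≤ 1 - Real.exp (-lam) := by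
    have := Real.exp_lt_one_iff.2 (neg_lt_zero.2 h0); linarith
  have hb := (min_one_bounds (x := Real.exp ((j:ℝ) - α)) (exp_pos _).le).1.1
  unfold aterm
  exact mul_nonneg (mul_nonneg hp0 (exp_pos _).le) hb

lemma bterm_nonneg {lam : ℝ} (h0 : 0 < lam) (α : ℝ) (j : ℤ) : 0 ≤ bterm lam α j := by
  have hp0 : 0 ≤ 1 - Real.exp (-lam) := by
    have := Real.exp_lt_one_iff.2 (neg_lt_zero.2 h0); linarith
  unfold bterm; positivity

lemma aterm_le {lam : ℝ} (h0 : 0 < lam) (α : ℝ) (j : ℤ) :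
    aterm lam α j ≤ Real.exp lam * maj lam α j := by
  obtain ⟨⟨hge, hle⟩, -⟩ := min_one_bounds (x := Real.exp ((j:ℝ) - α)) (exp_pos _).le
  exact bound_aux h0 hge (hle.trans (min_le_left _ _)) (hle.trans (min_le_right _ _))

lemma bterm_le {lam : ℝ} (h0 : 0 < lam) (α : ℝ) (j : ℤ) :
    bterm lam α j ≤ Real.exp lam * maj lam α j := by
  obtain ⟨-, hge, hle⟩ := min_one_bounds (x := Real.exp ((j:ℝ) - α)) (exp_pos _).le
  exact bound_aux h0 hge (hle.trans (min_le_left _ _)) (hle.trans (min_le_right _ _))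

lemma summable_aterm {lam : ℝ} (h0 : 0 < lam) (h1 : lam < 1) (α : ℝ) :
    Summable (aterm lam α) :=
  Summable.of_nonneg_of_le (aterm_nonneg h0 α) (aterm_le h0 α)
    ((summable_maj h0 h1 α).mul_left _)

lemma summable_bterm {lam : ℝ} (h0 : 0 < lam) (h1 : lam < 1) (α : ℝ) :
    Summable (bterm lam α) :=
  Summable.of_nonneg_of_le (bterm_nonneg h0 α) (bterm_le h0 α)
    ((summable_maj h0 h1 α).mul_left _)

lemma summable_cterm {lam : ℝ} (h0 : 0 < lam) (h1 : lam < 1) (c α : ℝ) :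
    Summable (cterm lam c α) := by
  have : cterm lam c α = fun j => bterm lam α j - c * aterm lam α j :=
    funext (cterm_eq lam c α)
  rw [this]
  exact (summable_bterm h0 h1 α).sub ((summable_aterm h0 h1 α).mul_left c)

def Psi (lam c α : ℝ) : ℝ := ∑' j : ℤ, cterm lam c α j

lemma cterm_shift (lam c α : ℝ) (j : ℤ) :
    cterm lam c (α + 1) j = Real.exp (-lam) * cterm lam c α (j - 1) := by
  simp only [cterm]
  push_cast
  have e1 : (j : ℝ) - (α + 1) = (j : ℝ) - 1 - α := by ring
  have e2 : -lam * ((j : ℝ) - 1) = -lam + -lam * ((j : ℝ) - 1 - 1) := by ring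
  rw [e1, e2, Real.exp_add]
  ring

lemma Psi_shift (lam c α : ℝ) : Psi lam c (α + 1) = Real.exp (-lam) * Psi lam c α := by
  unfold Psi
  rw [← tsum_mul_left]
  calc ∑' j : ℤ, cterm lam c (α + 1) j
      = ∑' j : ℤ, Real.exp (-lam) * cterm lam c α (j - 1) :=
        tsum_congr (cterm_shift lam c α)
    _ = ∑' j : ℤ, Real.exp (-lam) * cterm lam c α j :=
        (Equiv.subRight (1 : ℤ)).tsum_eq fun j => Real.exp (-lam) * cterm lam c α j

lemma Psi_zero_all {lam c : ℝ} (h : ∀ α ∈ Set.Ico (0:ℝ) 1, Psi lam c α = 0) :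
    ∀ α : ℝ, Psi lam c α = 0 := by
  have hne : Real.exp (-lam) ≠ 0 := exp_ne_zero _
  have key : ∀ n : ℤ, ∀ α : ℝ, Psi lam c (α + n) = Real.exp (-lam) ^ n * Psi lam c α := by
    intro n
    induction n using Int.induction_on with
    | zero => intro α; simp
    | succ k ih =>
        intro α
        have e : α + (((k : ℤ) + 1 : ℤ) : ℝ) = (α + ((k : ℤ) : ℝ)) + 1 := by push_cast; ring
        rw [e, Psi_shift, ih α, zpow_add₀ hne, zpow_one]; ring
    | pred k ih =>
        intro α
        have h2 := Psi_shift lam c (α + ((-(k:ℤ) - 1 : ℤ) : ℝ))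
        have h3 : (α + ((-(k:ℤ) - 1 : ℤ) : ℝ)) + 1 = α + ((-(k:ℤ) : ℤ) : ℝ) := by
          push_cast; ring
        rw [h3, ih α] at h2
        rw [zpow_sub₀ hne, zpow_one, div_mul_eq_mul_div, eq_div_iff hne]
        linarith [h2]
  intro α
  have hfr : Int.fract α ∈ Set.Ico (0:ℝ) 1 := ⟨Int.fract_nonneg α, Int.fract_lt_one α⟩
  have hα : α = Int.fract α + (⌊α⌋ : ℤ) := by rw [add_comm]; exact (Int.floor_add_fract α).symm
  rw [hα, key ⌊α⌋ (Int.fract α), h _ hfr, mul_zero]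

def mC (lam : ℝ) : ℂ := -(lam:ℂ) - 2*Real.pi*Complex.I

lemma mC_re (lam : ℝ) : (mC lam).re = -lam := by simp [mC]
lemma mC_im (lam : ℝ) : (mC lam).im = -(2*Real.pi) := by simp [mC]

lemma mC_ne (lam : ℝ) : mC lam ≠ 0 := by
  intro h
  have := congrArg Complex.im h
  rw [mC_im] at this
  simp at this

lemma contOn_cpow (z : ℂ) : ContinuousOn (fun t : ℝ => (t:ℂ) ^ z) (Ioi 0) := by
  intro t ht
  exact (Complex.continuousAt_ofReal_cpow_const t z (Or.inr (ne_of_gt ht))).continuousWithinAt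

lemma norm_cpow {t : ℝ} (ht : 0 < t) (z : ℂ) : ‖(t:ℂ) ^ z‖ = t ^ z.re := by
  rw [Complex.norm_cpow_eq_rpow_re_of_pos ht]


lemma abs_phi_le (c : ℝ) {t : ℝ} (ht : 0 ≤ t) : |phi c t| ≤ (1 + |c|) * min 1 t := by
  obtain ⟨⟨ha0, ha1⟩, hb0, hb1⟩ := min_one_bounds ht
  have hmin : 0 ≤ min 1 t := le_min zero_le_one ht
  have k1 := mul_le_mul_of_nonneg_left ha1 (abs_nonneg c)
  have k2 := mul_le_mul_of_nonneg_right (neg_abs_le c) ha0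
  have k3 := mul_le_mul_of_nonneg_right (le_abs_self c) ha0
  rw [abs_le]
  constructor <;> [skip; skip] <;> · simp only [phi]; nlinarith
lemma phi_cont (c : ℝ) : Continuous (phi c) := by unfold phi; fun_prop

lemma integrable_aux {lam : ℝ} (h0 : 0 < lam) (h1 : lam < 1) {F : ℝ → ℂ}
    (hF : ContinuousOn F (Ioi 0)) {K : ℝ} (hK0 : 0 ≤ K)
    (hK : ∀ t ∈ Ioi (0:ℝ), ‖F t‖ ≤ K * (t ^ (-lam-1) * min 1 t)) :
    IntegrableOn F (Ioi 0) := by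
  have hsub1 : Ioc (0:ℝ) 1 ⊆ Ioi 0 := Ioc_subset_Ioi_self
  have hsub2 : Ioi (1:ℝ) ⊆ Ioi 0 := Ioi_subset_Ioi zero_le_one
  rw [← Set.Ioc_union_Ioi_eq_Ioi (zero_le_one (α := ℝ))]
  apply MeasureTheory.IntegrableOn.union
  · have hdom : IntegrableOn (fun t : ℝ => K * t ^ (-lam)) (Ioc 0 1) := by
      apply Integrable.const_mul
      have h := intervalIntegral.intervalIntegrable_rpow' (a := (0:ℝ)) (b := 1)
        (r := -lam) (by linarith)
      rwa [intervalIntegrable_iff_integrableOn_Ioc_of_le zero_le_one] at h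
    apply hdom.mono' ((hF.mono hsub1).aestronglyMeasurable measurableSet_Ioc)
    rw [ae_restrict_iff' measurableSet_Ioc]
    filter_upwards with t ht
    calc ‖F t‖ ≤ K * (t ^ (-lam-1) * min 1 t) := hK t (hsub1 ht)
      _ = K * t ^ (-lam) := by
          rw [min_eq_right ht.2, ← Real.rpow_add_one (ne_of_gt ht.1)]
          norm_num
  · have hdom : IntegrableOn (fun t : ℝ => K * t ^ (-lam-1)) (Ioi 1) :=
      (integrableOn_Ioi_rpow_of_lt (by linarith) one_pos).const_mul K
    apply hdom.mono' ((hF.mono hsub2).aestronglyMeasurable measurableSet_Ioi)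
    rw [ae_restrict_iff' measurableSet_Ioi]
    filter_upwards with t ht
    have ht0 : (0:ℝ) < t := lt_trans one_pos ht
    calc ‖F t‖ ≤ K * (t ^ (-lam-1) * min 1 t) := hK t (hsub2 ht)
      _ ≤ K * (t ^ (-lam-1) * 1) := by
          apply mul_le_mul_of_nonneg_left _ hK0
          exact mul_le_mul_of_nonneg_left (min_le_left _ _) (Real.rpow_nonneg ht0.le _)
      _ = K * t ^ (-lam-1) := by ring

def fC (lam c : ℝ) (t : ℝ) : ℂ := (t:ℂ) ^ (mC lam - 1) * ((phi c t : ℝ) : ℂ)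
def fA (lam : ℝ) (t : ℝ) : ℂ := (t:ℂ) ^ (mC lam - 1) * ((t * Real.exp (-t) : ℝ) : ℂ)
def fB (lam : ℝ) (t : ℝ) : ℂ := (t:ℂ) ^ (mC lam - 1) * ((1 - Real.exp (-t) : ℝ) : ℂ)
def fG (lam : ℝ) (t : ℝ) : ℂ := (t:ℂ) ^ (mC lam) * ((Real.exp (-t) : ℝ) : ℂ)

lemma mC_sub_one_re (lam : ℝ) : (mC lam - 1).re = -lam - 1 := by simp [mC]

lemma intOn_fC_cont {lam : ℝ} (c : ℝ) : ContinuousOn (fC lam c) (Ioi 0) :=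
  (contOn_cpow _).mul (Complex.continuous_ofReal.comp (phi_cont c)).continuousOn

lemma intOn_fC {lam : ℝ} (h0 : 0 < lam) (h1 : lam < 1) (c : ℝ) :
    IntegrableOn (fC lam c) (Ioi 0) := by
  apply integrable_aux h0 h1
    ((contOn_cpow _).mul (Complex.continuous_ofReal.comp (phi_cont c)).continuousOn)
    (by positivity : (0:ℝ) ≤ 1 + |c|)
  intro t ht
  simp only [Pi.mul_apply, Function.comp_apply]; rw [norm_mul, norm_cpow ht, mC_sub_one_re, Complex.norm_real, Real.norm_eq_abs]
  rw [mul_comm (1 + |c|) _, mul_assoc]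
  exact mul_le_mul_of_nonneg_left ((abs_phi_le c ht.le).trans_eq (by ring))
    (Real.rpow_nonneg ht.le _)

lemma norm_aux_AB {lam : ℝ} {t x : ℝ} (ht : 0 < t) (hx0 : 0 ≤ x) (hx : x ≤ min 1 t) :
    t ^ (-lam-1) * x ≤ 1 * (t ^ (-lam-1) * min 1 t) := by
  rw [one_mul]
  exact mul_le_mul_of_nonneg_left hx (Real.rpow_nonneg ht.le _)

lemma intOn_fA {lam : ℝ} (h0 : 0 < lam) (h1 : lam < 1) :
    IntegrableOn (fA lam) (Ioi 0) := by
  apply integrable_aux h0 h1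
    ((contOn_cpow _).mul (Complex.continuous_ofReal.comp (by fun_prop)).continuousOn)
    zero_le_one
  intro t ht
  simp only [Pi.mul_apply, Function.comp_apply]; rw [norm_mul, norm_cpow ht, mC_sub_one_re, Complex.norm_real, Real.norm_eq_abs,
    abs_of_nonneg (min_one_bounds ht.le).2.1]
  exact norm_aux_AB ht (min_one_bounds ht.le).2.1 (min_one_bounds ht.le).2.2

lemma intOn_fB {lam : ℝ} (h0 : 0 < lam) (h1 : lam < 1) :
    IntegrableOn (fB lam) (Ioi 0) := by
  apply integrable_aux h0 h1
    ((contOn_cpow _).mul (Complex.continuous_ofReal.comp (by fun_prop)).continuousOn)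
    zero_le_one
  intro t ht
  simp only [Pi.mul_apply, Function.comp_apply]; rw [norm_mul, norm_cpow ht, mC_sub_one_re, Complex.norm_real, Real.norm_eq_abs,
    abs_of_nonneg (min_one_bounds ht.le).1.1]
  exact norm_aux_AB ht (min_one_bounds ht.le).1.1 (min_one_bounds ht.le).1.2

lemma intOn_fG {lam : ℝ} (h0 : 0 < lam) (h1 : lam < 1) :
    IntegrableOn (fG lam) (Ioi 0) := by
  apply integrable_aux h0 h1
    ((contOn_cpow _).mul (Complex.continuous_ofReal.comp (by fun_prop)).continuousOn)
    zero_le_one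
  intro t ht
  simp only [Pi.mul_apply, Function.comp_apply]; rw [norm_mul, norm_cpow ht, Complex.norm_real, Real.norm_eq_abs]
  have : (mC lam).re = -lam := mC_re lam
  rw [this, abs_of_nonneg (exp_pos _).le]
  have h2 : t ^ (-lam) = t ^ (-lam-1) * t := by
    rw [← Real.rpow_add_one (ne_of_gt ht)]; norm_num
  rw [h2, mul_assoc]
  exact norm_aux_AB ht (min_one_bounds ht.le).2.1 (min_one_bounds ht.le).2.2

lemma mC_add_one_re (lam : ℝ) : (mC lam + 1).re = 1 - lam := by simp [mC]; ring

lemma intA_eq {lam : ℝ} (h0 : 0 < lam) (h1 : lam < 1) :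
    ∫ t in Ioi (0:ℝ), fA lam t = Complex.Gamma (mC lam + 1) := by
  rw [Complex.Gamma_eq_integral (by rw [mC_add_one_re]; linarith), Complex.GammaIntegral]
  apply setIntegral_congr_fun measurableSet_Ioi
  intro t ht
  have htne : (t:ℂ) ≠ 0 := Complex.ofReal_ne_zero.2 (ne_of_gt ht)
  simp only [fA]
  rw [show mC lam + 1 - 1 = mC lam - 1 + 1 by ring, Complex.cpow_add _ _ htne, Complex.cpow_one]
  push_cast
  ring

lemma intG_eq {lam : ℝ} (h0 : 0 < lam) (h1 : lam < 1) :
    ∫ t in Ioi (0:ℝ), fG lam t = Complex.Gamma (mC lam + 1) := by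
  rw [Complex.Gamma_eq_integral (by rw [mC_add_one_re]; linarith), Complex.GammaIntegral]
  apply setIntegral_congr_fun measurableSet_Ioi
  intro t ht
  simp only [fG]
  rw [show mC lam + 1 - 1 = mC lam by ring]
  ring

lemma hasDeriv_Fb {lam : ℝ} (x : ℝ) (hx : 0 < x) :
    HasDerivAt (fun t : ℝ => (t:ℂ) ^ (mC lam) / (mC lam) * ((1 - Real.exp (-t) : ℝ) : ℂ))
      (fB lam x + fG lam x / mC lam) x := by
  have hm : mC lam ≠ 0 := mC_ne lam
  have hu : HasDerivAt (fun t : ℝ => (t:ℂ) ^ (mC lam) / (mC lam)) ((x:ℂ) ^ (mC lam - 1)) x := by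
    have h := hasDerivAt_ofReal_cpow_const' (ne_of_gt hx) (r := mC lam - 1)
      (by intro h; apply hm; linear_combination h)
    simpa using h
  have hvr : HasDerivAt (fun t : ℝ => 1 - Real.exp (-t)) (Real.exp (-x)) x := by
    have h1 : HasDerivAt (fun t : ℝ => -t) (-1) x := (hasDerivAt_id x).neg
    have h2 := (Real.hasDerivAt_exp (-x)).comp x h1
    have h3 := h2.const_sub 1
    simpa using h3
  have hv : HasDerivAt (fun t : ℝ => ((1 - Real.exp (-t) : ℝ) : ℂ)) ((Real.exp (-x) : ℝ) : ℂ) x :=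
    hvr.ofReal_comp
  have := hu.mul hv
  convert this using 1
  · rfl
  · rfl
  simp only [fB, fG]
  field_simp

lemma tendsto_Fb_top {lam : ℝ} (h0 : 0 < lam) :
    Tendsto (fun t : ℝ => (t:ℂ) ^ (mC lam) / (mC lam) * ((1 - Real.exp (-t) : ℝ) : ℂ))
      atTop (nhds 0) := by
  apply squeeze_zero_norm' (a := fun t : ℝ => t ^ (-lam) * ‖mC lam‖⁻¹)
  · filter_upwards [eventually_gt_atTop (0:ℝ)] with t ht
    rw [norm_mul, norm_div, norm_cpow ht, mC_re, Complex.norm_real, Real.norm_eq_abs]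
    have h1 : |1 - Real.exp (-t)| ≤ 1 := by
      rw [abs_of_nonneg (min_one_bounds ht.le).1.1]
      exact (min_one_bounds ht.le).1.2.trans (min_le_left _ _)
    calc t ^ (-lam) / ‖mC lam‖ * |1 - Real.exp (-t)|
        ≤ t ^ (-lam) / ‖mC lam‖ * 1 := by
          apply mul_le_mul_of_nonneg_left h1 (by positivity)
      _ = t ^ (-lam) * ‖mC lam‖⁻¹ := by rw [mul_one, div_eq_mul_inv]
  · have := (tendsto_rpow_neg_atTop h0).mul_const (‖mC lam‖⁻¹)
    simpa using this

lemma intB_eq {lam : ℝ} (h0 : 0 < lam) (h1 : lam < 1) :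
    ∫ t in Ioi (0:ℝ), fB lam t = -(Complex.Gamma (mC lam + 1) / mC lam) := by
  have hm : mC lam ≠ 0 := mC_ne lam
  set Fb : ℝ → ℂ := fun t => (t:ℂ) ^ (mC lam) / (mC lam) * ((1 - Real.exp (-t) : ℝ) : ℂ) with hFb
  have hBint := intOn_fB h0 h1
  have hGint := intOn_fG h0 h1
  -- FTC on Ioi ε for ε = 1/(k+1)
  have hFTC : ∀ k : ℕ, ∫ t in Ioi (1/((k:ℝ)+1)), fB lam t =
      -Fb (1/((k:ℝ)+1)) - (∫ t in Ioi (1/((k:ℝ)+1)), fG lam t) / mC lam := by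
    intro k
    have hε : (0:ℝ) < 1/((k:ℝ)+1) := by positivity
    have hsub : Ioi (1/((k:ℝ)+1)) ⊆ Ioi (0:ℝ) := Ioi_subset_Ioi hε.le
    have hint1 : IntegrableOn (fB lam) (Ioi (1/((k:ℝ)+1))) := hBint.mono_set hsub
    have hint2 : IntegrableOn (fun t => fG lam t / mC lam) (Ioi (1/((k:ℝ)+1))) :=
      (hGint.mono_set hsub).div_const _
    have key := MeasureTheory.integral_Ioi_of_hasDerivAt_of_tendsto
      (f := Fb) (f' := fun t => fB lam t + fG lam t / mC lam) (a := 1/((k:ℝ)+1)) (m := 0)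
      ((hasDeriv_Fb _ hε).continuousAt.continuousWithinAt)
      (fun x hx => hasDeriv_Fb x (hε.trans hx))
      (hint1.add hint2) (tendsto_Fb_top h0)
    rw [MeasureTheory.integral_add hint1 hint2, MeasureTheory.integral_div] at key
    linear_combination key
  have hmono : Monotone (fun k : ℕ => Ioi (1/((k:ℝ)+1))) := by
    intro a b hab
    apply Ioi_subset_Ioi
    have h : ((a:ℝ)+1) ≤ (b:ℝ)+1 := by exact_mod_cast Nat.succ_le_succ hab
    exact one_div_le_one_div_of_le (by positivity) h
  have hunion : (⋃ k : ℕ, Ioi (1/((k:ℝ)+1))) = Ioi (0:ℝ) := by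
    ext t
    simp only [mem_iUnion, mem_Ioi]
    constructor
    · rintro ⟨k, hk⟩; exact lt_trans (by positivity) hk
    · intro ht; obtain ⟨n, hn⟩ := exists_nat_one_div_lt ht; exact ⟨n, hn⟩
  have hlim1 : Tendsto (fun k : ℕ => ∫ t in Ioi (1/((k:ℝ)+1)), fB lam t) atTop
      (nhds (∫ t in Ioi (0:ℝ), fB lam t)) := by
    have h := MeasureTheory.tendsto_setIntegral_of_monotone
      (s := fun k : ℕ => Ioi (1/((k:ℝ)+1))) (fun k => measurableSet_Ioi) hmono
      (by rw [hunion]; exact hBint)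
    rwa [hunion] at h
  have hlim2 : Tendsto (fun k : ℕ => ∫ t in Ioi (1/((k:ℝ)+1)), fG lam t) atTop
      (nhds (Complex.Gamma (mC lam + 1))) := by
    have h := MeasureTheory.tendsto_setIntegral_of_monotone
      (s := fun k : ℕ => Ioi (1/((k:ℝ)+1))) (fun k => measurableSet_Ioi) hmono
      (by rw [hunion]; exact hGint)
    rwa [hunion, intG_eq h0 h1] at h
  have hlim3 : Tendsto (fun k : ℕ => Fb (1/((k:ℝ)+1))) atTop (nhds 0) := by
    apply squeeze_zero_norm' (a := fun k : ℕ => (1/((k:ℝ)+1)) ^ (1-lam) * ‖mC lam‖⁻¹)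
    · filter_upwards with k
      have hε : (0:ℝ) < 1/((k:ℝ)+1) := by positivity
      rw [hFb]
      rw [norm_mul, norm_div, norm_cpow hε, mC_re, Complex.norm_real, Real.norm_eq_abs,
        abs_of_nonneg (min_one_bounds hε.le).1.1]
      calc (1/((k:ℝ)+1)) ^ (-lam) / ‖mC lam‖ * (1 - Real.exp (-(1/((k:ℝ)+1))))
          ≤ (1/((k:ℝ)+1)) ^ (-lam) / ‖mC lam‖ * (1/((k:ℝ)+1)) :=
            mul_le_mul_of_nonneg_left
              ((min_one_bounds hε.le).1.2.trans (min_le_right _ _)) (by positivity)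
        _ = (1/((k:ℝ)+1)) ^ (1-lam) * ‖mC lam‖⁻¹ := by
            rw [div_eq_mul_inv, mul_right_comm, show (1:ℝ)-lam = -lam + 1 by ring,
              Real.rpow_add_one (ne_of_gt hε)]
    · have h := ((tendsto_rpow_neg_atTop (show (0:ℝ) < 1-lam by linarith)).comp
        (tendsto_atTop_add_const_right atTop (1:ℝ)
          tendsto_natCast_atTop_atTop)).mul_const (‖mC lam‖⁻¹)
      rw [zero_mul] at h
      apply h.congr
      intro k
      simp only [Function.comp_apply]
      congr 1
      rw [one_div, Real.inv_rpow (by positivity), ← Real.rpow_neg (by positivity)]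
  have hlimR : Tendsto (fun k : ℕ => -Fb (1/((k:ℝ)+1)) -
      (∫ t in Ioi (1/((k:ℝ)+1)), fG lam t) / mC lam) atTop
      (nhds (-(0:ℂ) - Complex.Gamma (mC lam + 1) / mC lam)) :=
    (hlim3.neg).sub (hlim2.div_const _)
  have heq := tendsto_nhds_unique hlim1 (hlimR.congr (fun k => (hFTC k).symm))
  rw [neg_zero, zero_sub] at heq
  exact heq

lemma intf_eq {lam : ℝ} (h0 : 0 < lam) (h1 : lam < 1) (c : ℝ) :
    ∫ t in Ioi (0:ℝ), fC lam c t =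
      Complex.Gamma (mC lam + 1) * (1 + (c:ℂ) / mC lam) := by
  have hpt : ∀ t : ℝ, fC lam c t = fA lam t - (c:ℂ) * fB lam t := by
    intro t
    simp only [fC, fA, fB, phi]
    push_cast
    ring
  calc ∫ t in Ioi (0:ℝ), fC lam c t = ∫ t in Ioi (0:ℝ), (fA lam t - (c:ℂ) * fB lam t) :=
      MeasureTheory.integral_congr_ae (Filter.Eventually.of_forall (fun t => hpt t))
    _ = (∫ t in Ioi (0:ℝ), fA lam t) - (c:ℂ) * ∫ t in Ioi (0:ℝ), fB lam t := by
        rw [MeasureTheory.integral_sub (intOn_fA h0 h1) ((intOn_fB h0 h1).const_mul _),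
          MeasureTheory.integral_const_mul]
    _ = _ := by rw [intA_eq h0 h1, intB_eq h0 h1]; ring

lemma unionIoc : (⋃ j : ℤ, Ioc (Real.exp (j:ℝ)) (Real.exp ((j:ℝ)+1))) = Ioi (0:ℝ) := by
  ext t
  simp only [mem_iUnion, mem_Ioc, mem_Ioi]
  constructor
  · rintro ⟨j, hj, -⟩; exact lt_trans (exp_pos _) hj
  · intro ht
    refine ⟨⌈Real.log t⌉ - 1, ?_, ?_⟩
    · push_cast
      have h2 : ((⌈Real.log t⌉:ℝ) - 1) < Real.log t := by
        have := Int.ceil_lt_add_one (Real.log t); linarith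
      calc Real.exp ((⌈Real.log t⌉:ℝ) - 1) < Real.exp (Real.log t) := Real.exp_lt_exp.2 h2
        _ = t := Real.exp_log ht
    · push_cast
      have h2 : Real.log t ≤ ((⌈Real.log t⌉:ℝ) - 1) + 1 := by
        have := Int.le_ceil (Real.log t); linarith
      calc t = Real.exp (Real.log t) := (Real.exp_log ht).symm
        _ ≤ _ := Real.exp_le_exp.2 h2

lemma disjIoc :
    Pairwise (Function.onFun Disjoint fun j : ℤ => Ioc (Real.exp (j:ℝ)) (Real.exp ((j:ℝ)+1))) := by
  have base : ∀ i j : ℤ, i < j →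
      Disjoint (Ioc (Real.exp (i:ℝ)) (Real.exp ((i:ℝ)+1)))
        (Ioc (Real.exp (j:ℝ)) (Real.exp ((j:ℝ)+1))) := by
    intro i j h
    rw [Set.Ioc_disjoint_Ioc]
    have hij : (i:ℝ) + 1 ≤ (j:ℝ) := by exact_mod_cast Int.add_one_le_iff.2 h
    calc min (Real.exp ((i:ℝ)+1)) (Real.exp ((j:ℝ)+1)) ≤ Real.exp ((i:ℝ)+1) :=
        min_le_left _ _
      _ ≤ Real.exp (j:ℝ) := Real.exp_le_exp.2 hij
      _ ≤ max (Real.exp (i:ℝ)) (Real.exp (j:ℝ)) := le_max_right _ _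
  intro i j hij
  rcases lt_or_gt_of_ne hij with h | h
  · exact base i j h
  · exact (base j i h).symm

def Hfun (lam c : ℝ) (v : ℝ) : ℂ :=
  Complex.exp (mC lam * (v:ℂ)) * ((phi c (Real.exp v) : ℝ) : ℂ)

lemma H_eq (lam c v : ℝ) : Hfun lam c v = Real.exp v • fC lam c (Real.exp v) := by
  simp only [Hfun, fC]
  rw [Complex.real_smul, Complex.ofReal_exp,
    Complex.cpow_def_of_ne_zero (by
      rw [← Complex.ofReal_exp]
      exact_mod_cast (Real.exp_pos v).ne'),
    ← Complex.ofReal_exp, ← Complex.ofReal_log (Real.exp_pos v).le, Real.log_exp,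
    Complex.ofReal_exp, ← mul_assoc, ← Complex.exp_add]
  congr 2
  ring

lemma H_cont (lam c : ℝ) : Continuous (Hfun lam c) := by
  apply Continuous.mul
  · exact Complex.continuous_exp.comp (continuous_const.mul Complex.continuous_ofReal)
  · exact Complex.continuous_ofReal.comp ((phi_cont c).comp Real.continuous_exp)

lemma piece {lam : ℝ} (h0 : 0 < lam) (h1 : lam < 1) (c : ℝ) (j : ℤ) :
    ∫ t in Ioc (Real.exp (j:ℝ)) (Real.exp ((j:ℝ)+1)), fC lam c t
      = ∫ u in (0:ℝ)..1, Hfun lam c (u + (j:ℝ)) := by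
  rw [intervalIntegral.integral_comp_add_right (fun v => Hfun lam c v) ((j:ℝ)),
    zero_add, add_comm (1:ℝ) ((j:ℝ))]
  rw [intervalIntegral.integral_congr (g := fun v => Real.exp v • (fC lam c ∘ Real.exp) v)
    (fun v _ => H_eq lam c v)]
  have hsub := intervalIntegral.integral_comp_smul_deriv'' (g := fC lam c) (f := Real.exp)
    (f' := Real.exp) (a := ((j:ℝ))) (b := (j:ℝ)+1)
    Real.continuous_exp.continuousOn
    (fun x _ => (Real.hasDerivAt_exp x).hasDerivWithinAt)
    Real.continuous_exp.continuousOn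
    ((intOn_fC_cont c).mono (by
        rintro t ⟨v, -, rfl⟩
        exact Real.exp_pos v))
  rw [hsub, intervalIntegral.integral_of_le (Real.exp_le_exp.2 (by linarith : (j:ℝ) ≤ (j:ℝ)+1))]

lemma expmj (lam : ℝ) (j : ℤ) :
    Complex.exp (mC lam * ((j:ℝ):ℂ)) = ((Real.exp (-lam*(j:ℝ)) : ℝ) : ℂ) := by
  rw [show mC lam * ((j:ℝ):ℂ) = (((-lam * (j:ℝ) : ℝ)):ℂ) + -((j:ℤ) * (2*(Real.pi:ℂ)*Complex.I))
      by push_cast [mC]; ring,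
    Complex.exp_add, Complex.exp_neg, Complex.exp_int_mul_two_pi_mul_I, inv_one, mul_one,
    Complex.ofReal_exp]

lemma sumHzero {lam : ℝ} (h0 : 0 < lam) (h1 : lam < 1) {c : ℝ}
    (hPsi : ∀ α : ℝ, Psi lam c α = 0) :
    ∑' j : ℤ, (∫ u in (0:ℝ)..1, Hfun lam c (u + (j:ℝ))) = 0 := by
  have hρ : ∀ j : ℤ, ∫ u in (0:ℝ)..1, Hfun lam c (u + (j:ℝ)) =
      ∫ u in Ioc (0:ℝ) 1, Hfun lam c (u + (j:ℝ)) := fun j =>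
    intervalIntegral.integral_of_le zero_le_one
  rw [tsum_congr hρ]
  have hp01 : 0 < 1 - Real.exp (-lam) := by
    have := Real.exp_lt_one_iff.2 (neg_lt_zero.2 h0); linarith
  have hK : (1 - Real.exp (-lam)) * Real.exp lam ≠ 0 :=
    mul_ne_zero (ne_of_gt hp01) (exp_ne_zero _)
  have hint : ∀ j : ℤ, Integrable (fun u => Hfun lam c (u + (j:ℝ)))
      (volume.restrict (Ioc (0:ℝ) 1)) := fun j =>
    ((H_cont lam c).comp (continuous_add_right _)).integrableOn_Ioc
  have hnormb : ∀ j : ℤ, ∀ u ∈ Ioc (0:ℝ) 1, ‖Hfun lam c (u + (j:ℝ))‖ ≤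
      (1+|c|) * Real.exp 1 * maj lam 0 j := by
    intro j u hu
    have hne : ‖Complex.exp (mC lam * ((u + (j:ℝ) : ℝ):ℂ))‖ = Real.exp (-lam * (u + (j:ℝ))) := by
      rw [Complex.norm_exp]
      congr 1
      simp [Complex.mul_re, mC_re, mC_im]
    rw [Hfun, norm_mul, hne, Complex.norm_real, Real.norm_eq_abs]
    have h1' : Real.exp (-lam * (u + (j:ℝ))) ≤ Real.exp (-lam * (j:ℝ)) := by
      apply Real.exp_le_exp.2
      nlinarith [hu.1]
    have h2' : |phi c (Real.exp (u + (j:ℝ)))| ≤ (1+|c|) * min 1 (Real.exp ((j:ℝ)+1)) := by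
      refine (abs_phi_le c (Real.exp_pos _).le).trans ?_
      apply mul_le_mul_of_nonneg_left _ (by positivity)
      exact min_le_min le_rfl (Real.exp_le_exp.2 (by linarith [hu.2]))
    calc Real.exp (-lam * (u + (j:ℝ))) * |phi c (Real.exp (u + (j:ℝ)))|
        ≤ Real.exp (-lam * (j:ℝ)) * ((1+|c|) * min 1 (Real.exp ((j:ℝ)+1))) :=
          mul_le_mul h1' h2' (abs_nonneg _) (exp_pos _).le
      _ ≤ (1+|c|) * Real.exp 1 * maj lam 0 j := by
          rw [show Real.exp (-lam * (j:ℝ)) * ((1+|c|) * min 1 (Real.exp ((j:ℝ)+1)))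
            = (1+|c|) * (Real.exp (-lam * (j:ℝ)) * min 1 (Real.exp ((j:ℝ)+1))) by ring,
            mul_assoc]
          apply mul_le_mul_of_nonneg_left _ (by positivity)
          rw [maj, mul_min_of_nonneg _ _ (exp_pos 1).le]
          apply le_min
          · calc Real.exp (-lam * (j:ℝ)) * min 1 (Real.exp ((j:ℝ)+1))
                ≤ Real.exp (-lam * (j:ℝ)) * 1 :=
                  mul_le_mul_of_nonneg_left (min_le_left _ _) (exp_pos _).le
              _ = Real.exp (-lam * (j:ℝ)) := mul_one _
              _ ≤ Real.exp 1 * Real.exp (-lam * (j:ℝ)) := by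
                  nlinarith [Real.one_le_exp (zero_le_one (α := ℝ)), Real.exp_pos (-lam * (j:ℝ))]
          · calc Real.exp (-lam * (j:ℝ)) * min 1 (Real.exp ((j:ℝ)+1))
                ≤ Real.exp (-lam * (j:ℝ)) * Real.exp ((j:ℝ)+1) :=
                  mul_le_mul_of_nonneg_left (min_le_right _ _) (exp_pos _).le
              _ = Real.exp 1 * (Real.exp ((1-lam) * (j:ℝ)) * Real.exp (-(0:ℝ))) := by
                  rw [← Real.exp_add, ← Real.exp_add, ← Real.exp_add]
                  congr 1
                  ring
  have hsumm : Summable (fun j : ℤ => ∫ u in Ioc (0:ℝ) 1, ‖Hfun lam c (u + (j:ℝ))‖) := by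
    apply Summable.of_nonneg_of_le
      (fun j => MeasureTheory.integral_nonneg (fun u => norm_nonneg _))
      (fun j => ?_) (((summable_maj h0 h1 0).mul_left ((1+|c|) * Real.exp 1)))
    calc ∫ u in Ioc (0:ℝ) 1, ‖Hfun lam c (u + (j:ℝ))‖
        ≤ ∫ _u in Ioc (0:ℝ) 1, ((1+|c|) * Real.exp 1 * maj lam 0 j) :=
          MeasureTheory.setIntegral_mono_on ((hint j).norm)
            (MeasureTheory.integrableOn_const (by
              rw [Real.volume_Ioc]; exact ENNReal.ofReal_ne_top))
            measurableSet_Ioc (hnormb j)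
      _ = (1+|c|) * Real.exp 1 * maj lam 0 j := by
          rw [MeasureTheory.setIntegral_const]
          rw [Real.volume_real_Ioc]
          norm_num
  rw [MeasureTheory.integral_tsum_of_summable_integral_norm hint hsumm]
  have hzero : ∀ u : ℝ, (∑' j : ℤ, Hfun lam c (u + (j:ℝ))) = 0 := by
    intro u
    have hterm : ∀ j : ℤ, Hfun lam c (u + (j:ℝ)) =
        Complex.exp (mC lam * (u:ℂ)) *
          ((((1 - Real.exp (-lam)) * Real.exp lam)⁻¹ * cterm lam c (-u) j : ℝ) : ℂ) := by
      intro j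
      have hc : cterm lam c (-u) j = ((1 - Real.exp (-lam)) * Real.exp lam) *
          (Real.exp (-lam * (j:ℝ)) * phi c (Real.exp (u + (j:ℝ)))) := by
        simp only [cterm]
        rw [show (j:ℝ) - (-u) = u + (j:ℝ) by ring,
          show -lam * ((j:ℝ) - 1) = lam + -lam * (j:ℝ) by ring, Real.exp_add]
        ring
      have hr : (((1 - Real.exp (-lam)) * Real.exp lam)⁻¹ * cterm lam c (-u) j : ℝ)
          = Real.exp (-lam*(j:ℝ)) * phi c (Real.exp (u + (j:ℝ))) := by
        rw [hc]
        field_simp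
      simp only [Hfun]
      rw [hr, show ((u + (j:ℝ) : ℝ):ℂ) = (u:ℂ) + ((j:ℝ):ℂ) by push_cast; ring,
        mul_add, Complex.exp_add, expmj lam j, Complex.ofReal_mul]
      ring
    calc ∑' j : ℤ, Hfun lam c (u + (j:ℝ))
        = ∑' j : ℤ, Complex.exp (mC lam * (u:ℂ)) *
            ((((1 - Real.exp (-lam)) * Real.exp lam)⁻¹ * cterm lam c (-u) j : ℝ) : ℂ) :=
          tsum_congr hterm
      _ = Complex.exp (mC lam * (u:ℂ)) *
            ∑' j : ℤ, ((((1 - Real.exp (-lam)) * Real.exp lam)⁻¹ * cterm lam c (-u) j : ℝ) : ℂ) :=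
          tsum_mul_left
      _ = 0 := by
          have h2 : (∑' j : ℤ,
              ((((1 - Real.exp (-lam)) * Real.exp lam)⁻¹ * cterm lam c (-u) j : ℝ) : ℂ)) = 0 := by
            rw [← Complex.ofReal_tsum]
            norm_cast
            rw [tsum_mul_left]
            have hps := hPsi (-u)
            unfold Psi at hps
            rw [hps, mul_zero]
          rw [h2, mul_zero]
  simp only [hzero]
  simp

lemma claimA {lam : ℝ} (h0 : 0 < lam) (h1 : lam < 1) {c : ℝ}
    (hPsi : ∀ α : ℝ, Psi lam c α = 0) :
    ∫ t in Ioi (0:ℝ), fC lam c t = 0 := by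
  have hs := MeasureTheory.hasSum_integral_iUnion
    (f := fC lam c) (fun j : ℤ => measurableSet_Ioc) disjIoc
    (by rw [unionIoc]; exact intOn_fC h0 h1 c)
  rw [unionIoc] at hs
  rw [← hs.tsum_eq, tsum_congr (piece h0 h1 c), sumHzero h0 h1 hPsi]

theorem key {lam : ℝ} (h0 : 0 < lam) (h1 : lam < 1) (c : ℝ)
    (hPsi : ∀ α : ℝ, Psi lam c α = 0) : False := by
  have hA := claimA h0 h1 hPsi
  rw [intf_eq h0 h1 c] at hA
  have hΓ : Complex.Gamma (mC lam + 1) ≠ 0 := by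
    apply Complex.Gamma_ne_zero
    intro n h
    have him := congrArg Complex.im h
    simp [mC] at him
  have hfac : (1 + (c:ℂ)/mC lam) ≠ 0 := by
    intro h
    have hm := mC_ne lam
    have h2 : (c:ℂ) = -mC lam := by
      field_simp at h
      linear_combination h
    have him := congrArg Complex.im h2
    simp [mC] at him
  exact (mul_ne_zero hΓ hfac) hA

def Afun (lam α : ℝ) : ℝ := ∑' j : ℤ, aterm lam α j
def Bfun (lam α : ℝ) : ℝ := ∑' j : ℤ, bterm lam α j

lemma Afun_pos {lam : ℝ} (h0 : 0 < lam) (h1 : lam < 1) (α : ℝ) : 0 < Afun lam α := by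
  apply Summable.tsum_pos (summable_aterm h0 h1 α) (aterm_nonneg h0 α) 1
  have hp : 0 < 1 - Real.exp (-lam) := by
    have := Real.exp_lt_one_iff.2 (neg_lt_zero.2 h0); linarith
  have h2 : Real.exp (-Real.exp (((1:ℤ):ℝ) - α)) < 1 :=
    Real.exp_lt_one_iff.2 (neg_lt_zero.2 (exp_pos _))
  unfold aterm
  apply mul_pos (mul_pos hp (exp_pos _))
  linarith

lemma noncon {lam : ℝ} (h0 : 0 < lam) (h1 : lam < 1) :
    ∃ α ∈ Set.Ico (0:ℝ) 1, ∃ β ∈ Set.Ico (0:ℝ) 1,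
      Bfun lam α / Afun lam α ≠ Bfun lam β / Afun lam β := by
  by_contra hcon
  push_neg at hcon
  set c := Bfun lam 0 / Afun lam 0 with hc
  have hzero : ∀ α ∈ Set.Ico (0:ℝ) 1, Psi lam c α = 0 := by
    intro α hα
    have hq := hcon α hα 0 ⟨le_refl 0, one_pos⟩
    have hA := Afun_pos h0 h1 α
    have hBA : Bfun lam α = c * Afun lam α := by
      rw [div_eq_iff (ne_of_gt hA)] at hq
      exact hq
    unfold Psi
    calc ∑' j : ℤ, cterm lam c α j
        = ∑' j : ℤ, (bterm lam α j - c * aterm lam α j) := tsum_congr (cterm_eq lam c α)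
      _ = Bfun lam α - c * Afun lam α := by
          rw [Summable.tsum_sub (summable_bterm h0 h1 α) ((summable_aterm h0 h1 α).mul_left c),
            tsum_mul_left]
          rfl
      _ = 0 := by rw [hBA]; ring
  exact key h0 h1 c (Psi_zero_all hzero)

/-! Part I : the value of `g` as a geometric series -/

lemma g_series {Ω : Type*} [MeasurableSpace Ω] (μ : Measure Ω) [IsProbabilityMeasure μ]
    {lam : ℝ} (h0 : 0 < lam) (h1 : lam < 1) {p : ℝ} (hp : p = 1 - Real.exp (-lam))
    (G : Ω → ℕ) (hGm : Measurable G)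
    (hG : ∀ k : ℕ, 1 ≤ k → μ {ω | G ω = k} = ENNReal.ofReal (p * (1 - p) ^ (k - 1)))
    {s : ℝ} (hs : 0 < s) :
    ∫ ω, Real.exp (-s * Real.exp (G ω)) ∂μ
      = ∑' k : ℕ, p * Real.exp (-lam) ^ k * Real.exp (-s * Real.exp ((k:ℝ)+1)) := by
  set q := Real.exp (-lam) with hq
  have hq0 : 0 < q := exp_pos _
  have hq1 : q < 1 := Real.exp_lt_one_iff.2 (neg_lt_zero.2 h0)
  have hp0 : 0 < p := by rw [hp]; linarith
  have h1p : 1 - p = q := by rw [hp]; ring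
  set ν := μ.map G with hν
  have hprob : IsProbabilityMeasure ν := Measure.isProbabilityMeasure_map hGm.aemeasurable
  have hνk : ∀ k : ℕ, 1 ≤ k → ν {k} = ENNReal.ofReal (p * q ^ (k-1)) := by
    intro k hk
    rw [hν, Measure.map_apply hGm (measurableSet_singleton k)]
    have : G ⁻¹' {k} = {ω | G ω = k} := by ext ω; simp
    rw [this, hG k hk, h1p]
  have hsum1 : HasSum (fun k : ℕ => p * q ^ k) 1 := by
    have h := (hasSum_geometric_of_lt_one hq0.le hq1).mul_left p
    have : p * (1 - q)⁻¹ = 1 := by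
      rw [hp]
      field_simp
      exact div_self (by linarith)
    rwa [this] at h
  have hν0 : ν {0} = 0 := by
    have hcompl : ν ({(0:ℕ)}ᶜ) = 1 := by
      have hset : ({(0:ℕ)}ᶜ : Set ℕ) = ⋃ k : ℕ, {k+1} := by
        ext n
        simp only [mem_compl_iff, mem_singleton_iff, mem_iUnion]
        constructor
        · intro h; exact ⟨n - 1, by omega⟩
        · rintro ⟨k, rfl⟩; omega
      rw [hset, measure_iUnion (fun i j hij => by
          simp only [Function.onFun, Set.disjoint_singleton]
          omega) (fun k => measurableSet_singleton _)]
      have : ∀ k : ℕ, ν {k+1} = ENNReal.ofReal (p * q ^ k) := by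
        intro k
        rw [hνk (k+1) (by omega), show (k+1) - 1 = k from rfl]
      rw [tsum_congr this, ← ENNReal.ofReal_tsum_of_nonneg
        (fun k => by positivity) hsum1.summable, hsum1.tsum_eq]
      simp
    have hadd := measure_add_measure_compl (μ := ν) (measurableSet_singleton (0:ℕ))
    rw [hcompl, measure_univ] at hadd
    have h2 : ν {0} + 1 = 0 + 1 := by rw [hadd, zero_add]
    exact WithTop.add_right_cancel ENNReal.one_ne_top h2
  set f : ℕ → ℝ := fun k => Real.exp (-s * Real.exp (k:ℝ)) with hf
  have hfm : Measurable f := measurable_from_top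
  have hfb : ∀ k, ‖f k‖ ≤ 1 := by
    intro k
    rw [hf, Real.norm_eq_abs, abs_of_pos (exp_pos _)]
    apply Real.exp_le_one_iff.2
    have := Real.exp_pos ((k:ℝ))
    nlinarith
  have hInt : Integrable f ν :=
    (integrable_const (1:ℝ)).mono' hfm.aestronglyMeasurable (Filter.Eventually.of_forall hfb)
  have step1 : ∫ ω, Real.exp (-s * Real.exp (G ω)) ∂μ = ∫ k, f k ∂ν :=
    (MeasureTheory.integral_map hGm.aemeasurable hfm.aestronglyMeasurable).symm
  rw [step1, MeasureTheory.integral_countable' hInt]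
  set w : ℕ → ℝ := fun k => (ν {k}).toReal • f k with hw
  have hw0 : w 0 = 0 := by rw [hw]; simp [hν0]
  have hwk : ∀ k : ℕ, w (k+1) = p * q ^ k * Real.exp (-s * Real.exp ((k:ℝ)+1)) := by
    intro k
    rw [hw]
    simp only [smul_eq_mul]
    rw [hνk (k+1) (by omega), show (k+1) - 1 = k by omega,
      ENNReal.toReal_ofReal (by positivity), hf]
    push_cast
    ring
  have hwsucc : Summable (fun k => w (k+1)) := by
    apply Summable.of_nonneg_of_le (fun k => by
        rw [hwk k]; positivity)
      (fun k => ?_) (hsum1.summable)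
    rw [hwk k]
    calc p * q ^ k * Real.exp (-s * Real.exp ((k:ℝ)+1)) ≤ p * q ^ k * 1 := by
          apply mul_le_mul_of_nonneg_left _ (by positivity)
          apply Real.exp_le_one_iff.2
          have := Real.exp_pos ((k:ℝ)+1)
          nlinarith
      _ = p * q ^ k := mul_one _
  have hsummw : Summable w := (summable_nat_add_iff 1).1 hwsucc
  change ∑' k : ℕ, w k = _
  rw [Summable.tsum_eq_zero_add hsummw, hw0, zero_add, tsum_congr hwk]

/-! Part II : derivative of the series -/

lemma deriv_series {lam : ℝ} (h0 : 0 < lam) (h1 : lam < 1) {p : ℝ}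
    (hp : p = 1 - Real.exp (-lam)) {s : ℝ} (hs : 0 < s) :
    HasDerivAt (fun x => ∑' k : ℕ, p * Real.exp (-lam) ^ k * Real.exp (-x * Real.exp ((k:ℝ)+1)))
      (∑' k : ℕ, -(p * Real.exp (-lam) ^ k * Real.exp ((k:ℝ)+1) *
        Real.exp (-s * Real.exp ((k:ℝ)+1)))) s := by
  set q := Real.exp (-lam) with hq
  have hq0 : 0 < q := exp_pos _
  have hq1 : q < 1 := Real.exp_lt_one_iff.2 (neg_lt_zero.2 h0)
  have hp0 : 0 < p := by rw [hp]; have := Real.exp_lt_one_iff.2 (neg_lt_zero.2 h0); linarith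
  have key := hasDerivAt_tsum_of_isPreconnected
    (g := fun (k : ℕ) (x : ℝ) => p * q ^ k * Real.exp (-x * Real.exp ((k:ℝ)+1)))
    (g' := fun (k : ℕ) (x : ℝ) => -(p * q ^ k * Real.exp ((k:ℝ)+1) *
      Real.exp (-x * Real.exp ((k:ℝ)+1))))
    (u := fun k : ℕ => p * q ^ k * (2/s))
    (t := Ioi (s/2)) (y₀ := s) (y := s)
    ?_ (isOpen_Ioi) (isPreconnected_Ioi) ?_ ?_
    (by simp [hs] : s ∈ Ioi (s/2)) ?_ (by simp [hs] : s ∈ Ioi (s/2))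
  · exact key
  · -- Summable u
    apply Summable.of_nonneg_of_le (fun k => by positivity) (fun k => le_refl _)
    exact ((summable_geometric_of_lt_one hq0.le hq1).mul_left p).mul_right (2/s)
  · -- HasDerivAt
    intro k y _
    have hlin : HasDerivAt (fun x : ℝ => -x * Real.exp ((k:ℝ)+1)) (-Real.exp ((k:ℝ)+1)) y := by
      simpa using ((hasDerivAt_id y).neg.mul_const (Real.exp ((k:ℝ)+1)))
    have hexp := hlin.exp
    have := hexp.const_mul (p * q ^ k)
    convert this using 1
    · rfl
    ring
  · -- bound
    intro k y hy
    rw [Real.norm_eq_abs, abs_neg, abs_of_nonneg (by positivity)]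
    have hxe : Real.exp ((k:ℝ)+1) * Real.exp (-y * Real.exp ((k:ℝ)+1)) ≤ 2/s := by
      have hy2 : s/2 < y := hy
      have h1' : Real.exp (-y * Real.exp ((k:ℝ)+1)) ≤ Real.exp (-(s/2) * Real.exp ((k:ℝ)+1)) := by
        apply Real.exp_le_exp.2
        nlinarith [Real.exp_pos ((k:ℝ)+1)]
      have h2' : (s/2) * Real.exp ((k:ℝ)+1) * Real.exp (-((s/2) * Real.exp ((k:ℝ)+1))) ≤ 1 :=
        ((min_one_bounds (by positivity : (0:ℝ) ≤ (s/2) * Real.exp ((k:ℝ)+1))).2.2).trans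
          (min_le_left _ _)
      have h3' : Real.exp (-((s/2) * Real.exp ((k:ℝ)+1))) = Real.exp (-(s/2) * Real.exp ((k:ℝ)+1)) := by
        congr 1; ring
      rw [h3'] at h2'
      calc Real.exp ((k:ℝ)+1) * Real.exp (-y * Real.exp ((k:ℝ)+1))
          ≤ Real.exp ((k:ℝ)+1) * Real.exp (-(s/2) * Real.exp ((k:ℝ)+1)) :=
            mul_le_mul_of_nonneg_left h1' (exp_pos _).le
        _ = (2/s) * (s/2 * Real.exp ((k:ℝ)+1) * Real.exp (-(s/2) * Real.exp ((k:ℝ)+1))) := by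
            field_simp
        _ ≤ (2/s) * 1 := mul_le_mul_of_nonneg_left h2' (by positivity)
        _ = 2/s := mul_one _
    calc p * q ^ k * Real.exp ((k:ℝ)+1) * Real.exp (-y * Real.exp ((k:ℝ)+1))
        = p * q ^ k * (Real.exp ((k:ℝ)+1) * Real.exp (-y * Real.exp ((k:ℝ)+1))) := by ring
      _ ≤ p * q ^ k * (2/s) := mul_le_mul_of_nonneg_left hxe (by positivity)
  · -- Summable at y₀
    apply Summable.of_nonneg_of_le (fun k => by positivity) (fun k => ?_)
      ((summable_geometric_of_lt_one hq0.le hq1).mul_left p)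
    calc p * q ^ k * Real.exp (-s * Real.exp ((k:ℝ)+1)) ≤ p * q ^ k * 1 := by
          apply mul_le_mul_of_nonneg_left _ (by positivity)
          apply Real.exp_le_one_iff.2
          nlinarith [Real.exp_pos ((k:ℝ)+1)]
      _ = p * q ^ k := mul_one _

/-! Part III : reindexing and limits -/

lemma reindex_sum (F : ℤ → ℝ) (n : ℕ) :
    ∑' k : ℕ, F ((k:ℤ) + 1 - n) = ∑' j : ℤ, (if (1:ℤ) - n ≤ j then F j else 0) := by
  have hinj : Function.Injective (fun k : ℕ => (k:ℤ) + 1 - n) := by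
    intro a b h
    simp only at h
    omega
  have hsupp : Function.support (fun j : ℤ => if (1:ℤ) - n ≤ j then F j else 0)
      ⊆ Set.range (fun k : ℕ => (k:ℤ) + 1 - n) := by
    intro j hj
    by_cases h : (1:ℤ) - n ≤ j
    · exact ⟨(j + n - 1).toNat, by simp only; omega⟩
    · rw [Function.mem_support, if_neg h] at hj
      exact absurd rfl hj
  have h := Function.Injective.tsum_eq hinj
    (f := fun j : ℤ => if (1:ℤ) - n ≤ j then F j else 0) hsupp
  rw [← h]
  apply tsum_congr
  intro k
  have hcond : ((1:ℤ) - n ≤ (k:ℤ) + 1 - n) := by omega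
  simp only [hcond, if_true]

lemma tendsto_truncated {lam : ℝ} (h0 : 0 < lam) (h1 : lam < 1) (α : ℝ)
    {F : ℤ → ℝ} (hFnn : ∀ j, 0 ≤ F j)
    (hFle : ∀ j, F j ≤ Real.exp lam * maj lam α j) :
    Tendsto (fun n : ℕ => ∑' j : ℤ, (if (1:ℤ) - n ≤ j then F j else 0)) atTop
      (nhds (∑' j : ℤ, F j)) := by
  apply tendsto_tsum_of_dominated_convergence
    (bound := fun j => Real.exp lam * maj lam α j)
    ((summable_maj h0 h1 α).mul_left (Real.exp lam))
  · intro j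
    have hev : ∀ᶠ n : ℕ in atTop, (if (1:ℤ) - n ≤ j then F j else 0) = F j := by
      filter_upwards [eventually_ge_atTop (1 - j).toNat] with n hn
      rw [if_pos (by omega)]
    exact tendsto_const_nhds.congr' (EventuallyEq.symm hev)
  · apply Eventually.of_forall
    intro n j
    rw [Real.norm_eq_abs]
    by_cases h : (1:ℤ) - n ≤ j
    · rw [if_pos h, abs_of_nonneg (hFnn j)]
      exact hFle j
    · rw [if_neg h, abs_zero]
      have := maj_nonneg lam α j
      positivity

lemma xexp_le {s x : ℝ} (hs : 0 < s) (hx : 0 ≤ x) : x * Real.exp (-s * x) ≤ 2/s := by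
  have h2' := ((min_one_bounds (by positivity : (0:ℝ) ≤ s * x)).2.2).trans (min_le_left _ _)
  have h3 : Real.exp (-(s*x)) = Real.exp (-s*x) := by congr 1; ring
  rw [h3] at h2'
  rw [le_div_iff₀ hs]
  nlinarith [h2']

lemma bterm_formula (lam α : ℝ) (n k : ℕ) :
    bterm lam α ((k:ℤ) + 1 - (n:ℕ)) = Real.exp (lam * n) *
      (Real.exp (-(n:ℝ) - α) * ((1 - Real.exp (-lam)) * Real.exp (-lam) ^ k *
        Real.exp ((k:ℝ)+1) * Real.exp (-Real.exp (-(n:ℝ) - α) * Real.exp ((k:ℝ)+1)))) := by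
  have e1 : Real.exp (lam * n) * Real.exp (-lam) ^ k
      = Real.exp (-lam * ((k:ℝ) + 1 - (n:ℝ) - 1)) := by
    rw [← Real.exp_nat_mul, ← Real.exp_add]; congr 1; ring
  have e2 : Real.exp (-(n:ℝ) - α) * Real.exp ((k:ℝ)+1)
      = Real.exp ((k:ℝ) + 1 - (n:ℝ) - α) := by
    rw [← Real.exp_add]; congr 1; ring
  have e3 : Real.exp (-Real.exp (-(n:ℝ) - α) * Real.exp ((k:ℝ)+1))
      = Real.exp (-Real.exp ((k:ℝ) + 1 - (n:ℝ) - α)) := by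
    congr 1
    rw [neg_mul, e2]
  simp only [bterm]
  push_cast
  rw [← e3, ← e2, ← e1]
  ring

lemma aterm_formula (lam α : ℝ) (n k : ℕ) :
    aterm lam α ((k:ℤ) + 1 - (n:ℕ)) = Real.exp (lam * n) *
      ((1 - Real.exp (-lam)) * Real.exp (-lam) ^ k *
        (1 - Real.exp (-Real.exp (-(n:ℝ) - α) * Real.exp ((k:ℝ)+1)))) := by
  have e1 : Real.exp (lam * n) * Real.exp (-lam) ^ k
      = Real.exp (-lam * ((k:ℝ) + 1 - (n:ℝ) - 1)) := by
    rw [← Real.exp_nat_mul, ← Real.exp_add]; congr 1; ring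
  have e2 : Real.exp (-(n:ℝ) - α) * Real.exp ((k:ℝ)+1)
      = Real.exp ((k:ℝ) + 1 - (n:ℝ) - α) := by
    rw [← Real.exp_add]; congr 1; ring
  have e3 : Real.exp (-Real.exp (-(n:ℝ) - α) * Real.exp ((k:ℝ)+1))
      = Real.exp (-Real.exp ((k:ℝ) + 1 - (n:ℝ) - α)) := by
    congr 1
    rw [neg_mul, e2]
  simp only [aterm]
  push_cast
  rw [← e3, ← e1]
  ring

end S14


/-- For `X = e^G` with `G` geometric of parameter `p = 1-e^{-λ}`, `λ ∈ (0,1)`, the limit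
`lim_{s→0+} -s g'(s)/(1-g(s))` does not exist; along `s_n = e^{-n-α}` the limit `L_α` exists
for each `α ∈ [0,1)` and `α ↦ L_α` is non-constant. -/
theorem stmt14 {Ω : Type*} [MeasurableSpace Ω] (μ : Measure Ω) [IsProbabilityMeasure μ]
    (lam : ℝ) (hlam : lam ∈ Set.Ioo (0 : ℝ) 1) (p : ℝ) (hp : p = 1 - Real.exp (-lam))
    (G : Ω → ℕ) (hGm : Measurable G)
    (hG : ∀ k : ℕ, 1 ≤ k → μ {ω | G ω = k} = ENNReal.ofReal (p * (1 - p) ^ (k - 1)))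
    (g : ℝ → ℝ) (hg : ∀ s, g s = ∫ ω, Real.exp (-s * Real.exp (G ω)) ∂μ) :
    (¬ ∃ l : ℝ, Filter.Tendsto (fun s => -(s * deriv g s) / (1 - g s))
        (nhdsWithin 0 (Set.Ioi 0)) (nhds l)) ∧
      ∃ Lfun : ℝ → ℝ,
        (∀ α ∈ Set.Ico (0 : ℝ) 1,
          Filter.Tendsto
            (fun n : ℕ =>
              -(Real.exp (-(n : ℝ) - α) * deriv g (Real.exp (-(n : ℝ) - α))) /
                (1 - g (Real.exp (-(n : ℝ) - α))))
            Filter.atTop (nhds (Lfun α))) ∧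
        ∃ α ∈ Set.Ico (0 : ℝ) 1, ∃ β ∈ Set.Ico (0 : ℝ) 1, Lfun α ≠ Lfun β := by
  obtain ⟨h0, h1⟩ := hlam
  have hq0 : (0:ℝ) < Real.exp (-lam) := Real.exp_pos _
  have hq1 : Real.exp (-lam) < 1 := Real.exp_lt_one_iff.2 (neg_lt_zero.2 h0)
  have hp0 : 0 < p := by rw [hp]; linarith
  have hsum1 : HasSum (fun k : ℕ => p * Real.exp (-lam) ^ k) 1 := by
    have h := (hasSum_geometric_of_lt_one hq0.le hq1).mul_left p
    have he : p * (1 - Real.exp (-lam))⁻¹ = 1 := by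
      rw [hp]; field_simp; exact div_self (by linarith)
    rwa [he] at h
  have main : ∀ α ∈ Set.Ico (0:ℝ) 1, Filter.Tendsto (fun n : ℕ =>
      -(Real.exp (-(n:ℝ) - α) * deriv g (Real.exp (-(n:ℝ) - α))) /
        (1 - g (Real.exp (-(n:ℝ) - α)))) Filter.atTop
      (nhds (S14.Bfun lam α / S14.Afun lam α)) := by
    intro α hα
    have hexpr : ∀ n : ℕ,
        -(Real.exp (-(n:ℝ) - α) * deriv g (Real.exp (-(n:ℝ) - α))) /
          (1 - g (Real.exp (-(n:ℝ) - α)))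
        = (∑' j : ℤ, (if (1:ℤ) - n ≤ j then S14.bterm lam α j else 0)) /
          (∑' j : ℤ, (if (1:ℤ) - n ≤ j then S14.aterm lam α j else 0)) := by
      intro n
      have hs : (0:ℝ) < Real.exp (-(n:ℝ) - α) := Real.exp_pos _
      have hW : Real.exp (lam * n) ≠ 0 := Real.exp_ne_zero _
      have hgT : g =ᶠ[nhds (Real.exp (-(n:ℝ) - α))] (fun x => ∑' k : ℕ,
          p * Real.exp (-lam) ^ k * Real.exp (-x * Real.exp ((k:ℝ)+1))) := by
        filter_upwards [isOpen_Ioi.mem_nhds hs] with y hy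
        rw [hg y]
        exact S14.g_series μ h0 h1 hp G hGm hG hy
      have hderiv : deriv g (Real.exp (-(n:ℝ) - α)) = ∑' k : ℕ,
          -(p * Real.exp (-lam) ^ k * Real.exp ((k:ℝ)+1) *
            Real.exp (-Real.exp (-(n:ℝ) - α) * Real.exp ((k:ℝ)+1))) := by
        rw [hgT.deriv_eq]
        exact (S14.deriv_series h0 h1 hp hs).deriv
      have hgval : g (Real.exp (-(n:ℝ) - α)) = ∑' k : ℕ,
          p * Real.exp (-lam) ^ k *
            Real.exp (-Real.exp (-(n:ℝ) - α) * Real.exp ((k:ℝ)+1)) := by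
        rw [hg]
        exact S14.g_series μ h0 h1 hp G hGm hG hs
      have hsumden : Summable (fun k : ℕ => p * Real.exp (-lam) ^ k *
          Real.exp (-Real.exp (-(n:ℝ) - α) * Real.exp ((k:ℝ)+1))) := by
        apply Summable.of_nonneg_of_le (fun k => by positivity) (fun k => ?_) hsum1.summable
        calc p * Real.exp (-lam) ^ k *
              Real.exp (-Real.exp (-(n:ℝ) - α) * Real.exp ((k:ℝ)+1))
            ≤ p * Real.exp (-lam) ^ k * 1 := by
              apply mul_le_mul_of_nonneg_left _ (by positivity)
              apply Real.exp_le_one_iff.2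
              nlinarith [Real.exp_pos ((k:ℝ)+1), Real.exp_pos (-(n:ℝ) - α)]
          _ = p * Real.exp (-lam) ^ k := mul_one _
      have hsumnum : Summable (fun k : ℕ => p * Real.exp (-lam) ^ k * Real.exp ((k:ℝ)+1) *
          Real.exp (-Real.exp (-(n:ℝ) - α) * Real.exp ((k:ℝ)+1))) := by
        apply Summable.of_nonneg_of_le (fun k => by positivity) (fun k => ?_)
          (hsum1.summable.mul_right (2 / Real.exp (-(n:ℝ) - α)))
        calc p * Real.exp (-lam) ^ k * Real.exp ((k:ℝ)+1) *
              Real.exp (-Real.exp (-(n:ℝ) - α) * Real.exp ((k:ℝ)+1))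
            = p * Real.exp (-lam) ^ k * (Real.exp ((k:ℝ)+1) *
              Real.exp (-Real.exp (-(n:ℝ) - α) * Real.exp ((k:ℝ)+1))) := by ring
          _ ≤ p * Real.exp (-lam) ^ k * (2 / Real.exp (-(n:ℝ) - α)) :=
              mul_le_mul_of_nonneg_left (S14.xexp_le hs (exp_pos _).le) (by positivity)
      -- numerator identity
      have hnum : Real.exp (lam * n) * -(Real.exp (-(n:ℝ) - α) * deriv g (Real.exp (-(n:ℝ) - α)))
          = ∑' j : ℤ, (if (1:ℤ) - n ≤ j then S14.bterm lam α j else 0) := by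
        rw [hderiv, tsum_neg,
          show ∀ T : ℝ, Real.exp (lam * n) * -(Real.exp (-(n:ℝ) - α) * -T)
            = Real.exp (lam * n) * (Real.exp (-(n:ℝ) - α) * T) from fun T => by ring,
          ← tsum_mul_left, ← tsum_mul_left, ← S14.reindex_sum (S14.bterm lam α) n]
        apply tsum_congr
        intro k
        rw [S14.bterm_formula lam α n k, ← hp]
      -- denominator identity
      have hden : Real.exp (lam * n) * (1 - g (Real.exp (-(n:ℝ) - α)))
          = ∑' j : ℤ, (if (1:ℤ) - n ≤ j then S14.aterm lam α j else 0) := by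
        have h1g : 1 - g (Real.exp (-(n:ℝ) - α)) = ∑' k : ℕ,
            p * Real.exp (-lam) ^ k *
              (1 - Real.exp (-Real.exp (-(n:ℝ) - α) * Real.exp ((k:ℝ)+1))) := by
          rw [hgval]
          nth_rewrite 1 [← hsum1.tsum_eq]
          rw [← Summable.tsum_sub hsum1.summable hsumden]
          apply tsum_congr
          intro k
          ring
        rw [h1g, ← tsum_mul_left, ← S14.reindex_sum (S14.aterm lam α) n]
        apply tsum_congr
        intro k
        rw [S14.aterm_formula lam α n k, ← hp]
      rw [← hnum, ← hden, mul_div_mul_left _ _ hW]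
    have hT := Filter.Tendsto.div
      (S14.tendsto_truncated h0 h1 α (S14.bterm_nonneg h0 α) (S14.bterm_le h0 α))
      (S14.tendsto_truncated h0 h1 α (S14.aterm_nonneg h0 α) (S14.aterm_le h0 α))
      (ne_of_gt (S14.Afun_pos h0 h1 α))
    exact (hT.congr (fun n => (hexpr n).symm))
  obtain ⟨α, hα, β, hβ, hne⟩ := S14.noncon h0 h1
  have hseq : ∀ γ : ℝ, Filter.Tendsto (fun n : ℕ => Real.exp (-(n:ℝ) - γ)) Filter.atTop
      (nhdsWithin 0 (Set.Ioi 0)) := by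
    intro γ
    rw [tendsto_nhdsWithin_iff]
    constructor
    · apply Real.tendsto_exp_atBot.comp
      apply Filter.tendsto_atBot_add_const_right
      exact Filter.tendsto_neg_atBot_iff.mpr tendsto_natCast_atTop_atTop
    · exact Filter.Eventually.of_forall (fun n => Real.exp_pos _)
  constructor
  · rintro ⟨l, hl⟩
    have hlα := tendsto_nhds_unique (main α hα) (hl.comp (hseq α))
    have hlβ := tendsto_nhds_unique (main β hβ) (hl.comp (hseq β))
    exact hne (hlα.trans hlβ.symm)
  · exact ⟨fun γ => S14.Bfun lam γ / S14.Afun lam γ, main, α, hα, β, hβ, hne⟩
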